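/- (Monotonicity consequence of (3.6).) With γ_0 and γ_j as in the context, if j_1 ≥ j_2 ≥ 0 are integers and k_1, k_2 ∈ ℕ satisfy p^{j_1}·k_1 = p^{j_2}·k_2, then |γ_{j_1}^{k_1}/k_1!| ≤ |γ_{j_2}^{k_2}/k_2!|. -/

import Mathlib

open Finset

section Aux

variable {p : ℕ} {K : Type*} [NormedField K]

lemma aux_coprime_norm (hp : p.Prime) [IsUltrametricDist K]
    (hpnorm : ‖(p : K)‖ = ((p : ℝ))⁻¹) {n : ℕ} (hpn : ¬ p ∣ n) : ‖(n : K)‖ = 1 := by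
  refine le_antisymm (IsUltrametricDist.norm_natCast_le_one K n) ?_
  have hcop : IsCoprime (n : ℤ) (p : ℤ) := by
    rw [Int.isCoprime_iff_gcd_eq_one, Int.gcd_natCast_natCast]
    exact Nat.Coprime.symm ((hp.coprime_iff_not_dvd).mpr hpn)
  obtain ⟨a, b, hab⟩ := hcop
  have h1 : (1 : K) = (a : K) * n + (b : K) * p := by
    have := congrArg (fun z : ℤ => (z : K)) hab
    push_cast at this
    exact this.symm
  have hp1 : (1 : ℝ) < p := by exact_mod_cast hp.one_lt
  by_contra hlt
  push_neg at hlt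
  have hb : ‖(b : K) * p‖ < 1 := by
    rw [norm_mul, hpnorm]
    have h2 : (p : ℝ)⁻¹ < 1 := by
      rw [inv_lt_one_iff₀]; right; exact hp1
    have h3 := IsUltrametricDist.norm_intCast_le_one (K) b
    have h4 : (0:ℝ) < (p:ℝ)⁻¹ := by positivity
    nlinarith [norm_nonneg ((b : K))]
  have ha : ‖(a : K) * n‖ < 1 := by
    rw [norm_mul]
    have h3 := IsUltrametricDist.norm_intCast_le_one (K) a
    nlinarith [norm_nonneg ((a : K)), norm_nonneg ((n : K))]
  have hle := IsUltrametricDist.norm_add_le_max ((a : K) * n) ((b : K) * p)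
  rw [← h1, norm_one] at hle
  have := max_lt ha hb
  linarith

lemma aux_nat_norm (hp : p.Prime) [IsUltrametricDist K]
    (hpnorm : ‖(p : K)‖ = ((p : ℝ))⁻¹) {n : ℕ} (hn : n ≠ 0) :
    ‖(n : K)‖ = ((p : ℝ))⁻¹ ^ padicValNat p n := by
  haveI : Fact p.Prime := ⟨hp⟩
  obtain ⟨m, hm⟩ := pow_padicValNat_dvd (p := p) (n := n)
  have hpm : ¬ p ∣ m := by
    rintro ⟨c, rfl⟩
    exact pow_succ_padicValNat_not_dvd hn ⟨c, by rw [pow_succ, mul_assoc]; exact hm⟩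
  have hcast : (n : K) = (p : K) ^ padicValNat p n * m := by exact_mod_cast congrArg (Nat.cast (R := K)) hm
  rw [hcast, norm_mul, norm_pow, hpnorm, aux_coprime_norm hp hpnorm hpm, mul_one]

lemma aux_term_norm (hp : p.Prime)
    (hpnorm : ‖(p : K)‖ = ((p : ℝ))⁻¹)
    {γ₀ : K} (hγ₀ : ‖γ₀‖ = (p : ℝ) ^ (-(1 : ℝ) / ((p : ℝ) - 1))) (i : ℕ) :
    ‖γ₀ ^ p ^ i / (p : K) ^ i‖ = (p : ℝ) ^ ((i : ℝ) - (p : ℝ) ^ i / ((p : ℝ) - 1)) := by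
  have hp1 : (1 : ℝ) < p := by exact_mod_cast hp.one_lt
  have hp0 : (0 : ℝ) < p := by linarith
  have e1 : ‖γ₀‖ ^ (p ^ i) = (p : ℝ) ^ ((-(1:ℝ)/((p:ℝ)-1)) * ((p ^ i : ℕ) : ℝ)) := by
    rw [hγ₀, ← Real.rpow_natCast ((p:ℝ) ^ (-(1:ℝ)/((p:ℝ)-1))) (p ^ i), ← Real.rpow_mul hp0.le]
  have e2 : ‖(p : K)‖ ^ i = (p : ℝ) ^ (-(i : ℝ)) := by
    rw [hpnorm, inv_pow, ← Real.rpow_natCast (p : ℝ) i, ← Real.rpow_neg hp0.le]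
  rw [norm_div, norm_pow, norm_pow, e1, e2, ← Real.rpow_sub hp0]
  congr 1
  push_cast
  have hR1 : ((p : ℝ) - 1) ≠ 0 := by linarith
  field_simp
  ring

end Aux

/-- Monotonicity consequence of (3.6): if `j₁ ≥ j₂` and `p^{j₁}·k₁ = p^{j₂}·k₂`, then
`|γ_{j₁}^{k₁}/k₁!| ≤ |γ_{j₂}^{k₂}/k₂!|`. -/
theorem stmt_8 (p : ℕ) (hp : p.Prime)
    (K : Type*) [NormedField K] [CompleteSpace K] [CharZero K]
    (hna : ∀ x y : K, ‖x + y‖ ≤ max ‖x‖ ‖y‖)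
    (hpnorm : ‖(p : K)‖ = ((p : ℝ))⁻¹)
    (γ₀ : K) (hγ₀ : ‖γ₀‖ = (p : ℝ) ^ (-(1 : ℝ) / ((p : ℝ) - 1)))
    (hroot : HasSum (fun i : ℕ => γ₀ ^ p ^ i / (p : K) ^ i) 0)
    (γ : ℕ → K) (hγ : ∀ j, γ j = ∑ i ∈ Finset.range (j + 1), γ₀ ^ p ^ i / (p : K) ^ i)
    (j₁ j₂ k₁ k₂ : ℕ) (hj : j₂ ≤ j₁) (hk : p ^ j₁ * k₁ = p ^ j₂ * k₂) :
    ‖γ j₁ ^ k₁ / (k₁.factorial : K)‖ ≤ ‖γ j₂ ^ k₂ / (k₂.factorial : K)‖ := by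
  haveI : IsUltrametricDist K :=
    IsUltrametricDist.isUltrametricDist_of_isNonarchimedean_norm hna
  haveI : Fact p.Prime := ⟨hp⟩
  have hp1 : (1 : ℝ) < p := by exact_mod_cast hp.one_lt
  have hp0 : (0 : ℝ) < p := by linarith
  have hR1 : (0 : ℝ) < (p : ℝ) - 1 := by linarith
  set R : ℝ := (p : ℝ) with hR
  set f : ℕ → K := fun i => γ₀ ^ p ^ i / (p : K) ^ i with hf
  set E : ℕ → ℝ := fun i => (i : ℝ) - (p : ℝ) ^ i / ((p : ℝ) - 1) with hE
  have hterm : ∀ i, ‖f i‖ = R ^ E i := fun i => aux_term_norm hp hpnorm hγ₀ i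
  -- E decreases by p^i - 1 at each step
  have hEstep : ∀ i : ℕ, E i - E (i + 1) = (p : ℝ) ^ i - 1 := by
    intro i
    simp only [hE]
    push_cast
    have hne : (p : ℝ) - 1 ≠ 0 := ne_of_gt hR1
    field_simp
    ring
  have hEanti : Antitone E := by
    apply antitone_nat_of_succ_le
    intro i
    have h1 : (1 : ℝ) ≤ (p : ℝ) ^ i := one_le_pow₀ hp1.le
    have := hEstep i
    linarith
  -- norm of gamma
  have hgamma : ∀ j, ‖γ j‖ = R ^ E (j + 1) := by
    intro j
    have htail : HasSum (fun n => f (n + (j + 1))) (-(γ j)) := by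
      have h0 := (hasSum_nat_add_iff' (f := f) (j + 1)).mpr hroot
      rwa [zero_sub, ← hγ] at h0
    have htail2 : HasSum (fun n => f (n + (j + 2))) (-(γ j) - f (j + 1)) := by
      have h0 := (hasSum_nat_add_iff' (f := f) (j + 2)).mpr hroot
      rw [Finset.sum_range_succ, zero_sub, ← hγ, neg_add, ← sub_eq_add_neg] at h0
      exact h0
    have hbound : ‖-(γ j) - f (j + 1)‖ ≤ ‖f (j + 2)‖ := by
      rw [← htail2.tsum_eq]
      refine IsUltrametricDist.norm_tsum_le_of_forall_le_of_nonneg (norm_nonneg _) ?_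
      intro n
      rw [hterm, hterm]
      exact (Real.rpow_le_rpow_left_iff hp1).mpr (hEanti (by omega))
    have hlt : ‖-(γ j) - f (j + 1)‖ < ‖f (j + 1)‖ := by
      refine hbound.trans_lt ?_
      rw [hterm, hterm]
      refine (Real.rpow_lt_rpow_left_iff hp1).mpr ?_
      have h1 : (1 : ℝ) < (p : ℝ) ^ (j + 1) := one_lt_pow₀ hp1 (by omega)
      have := hEstep (j + 1)
      linarith
    have hsum : (-(γ j) - f (j + 1)) + f (j + 1) = -(γ j) := by ring
    have hmax := IsUltrametricDist.norm_add_eq_max_of_norm_ne_norm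
      (x := -(γ j) - f (j + 1)) (y := f (j + 1)) hlt.ne
    rw [hsum, norm_neg, max_eq_right hlt.le] at hmax
    rw [hmax, hterm]
  -- norm of gamma^k / k!
  have hval : ∀ j k : ℕ, ‖γ j ^ k / (k.factorial : K)‖
      = R ^ (E (j + 1) * (k : ℝ) + (padicValNat p k.factorial : ℝ)) := by
    intro j k
    have e1 : ‖γ j‖ ^ k = R ^ (E (j + 1) * (k : ℝ)) := by
      rw [hgamma j, ← Real.rpow_natCast (R ^ E (j + 1)) k, ← Real.rpow_mul hp0.le]
    have e2 : ‖(k.factorial : K)‖ = R ^ (-(padicValNat p k.factorial : ℝ)) := by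
      rw [aux_nat_norm hp hpnorm k.factorial_ne_zero, inv_pow,
        ← Real.rpow_natCast R (padicValNat p k.factorial), ← Real.rpow_neg hp0.le]
    rw [norm_div, norm_pow, e1, e2, ← Real.rpow_sub hp0, sub_neg_eq_add]
  -- single step
  have hstep : ∀ j k : ℕ, ‖γ (j + 1) ^ k / (k.factorial : K)‖
      ≤ ‖γ j ^ (p * k) / ((p * k).factorial : K)‖ := by
    intro j k
    rw [hval, hval, padicValNat_factorial_mul]
    refine (Real.rpow_le_rpow_left_iff hp1).mpr ?_
    have hid : E (j + 1) * ((p * k : ℕ) : ℝ) + ((padicValNat p k.factorial + k : ℕ) : ℝ)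
        - (E (j + 1 + 1) * (k : ℝ) + (padicValNat p k.factorial : ℝ))
        = (k : ℝ) * (((p : ℝ) - 1) * ((j : ℝ) + 1)) := by
      simp only [hE]
      push_cast
      field_simp
      ring
    nlinarith [mul_nonneg (Nat.cast_nonneg k : (0:ℝ) ≤ k)
      (mul_nonneg hR1.le (by positivity : (0:ℝ) ≤ (j : ℝ) + 1))]
  -- induction
  have claim : ∀ d j k : ℕ, ‖γ (j + d) ^ k / (k.factorial : K)‖
      ≤ ‖γ j ^ (p ^ d * k) / ((p ^ d * k).factorial : K)‖ := by
    intro d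
    induction d with
    | zero => intro j k; simp
    | succ d ih =>
      intro j k
      calc ‖γ (j + (d + 1)) ^ k / (k.factorial : K)‖
          = ‖γ ((j + 1) + d) ^ k / (k.factorial : K)‖ := by rw [show j + (d+1) = (j+1)+d by omega]
        _ ≤ ‖γ (j + 1) ^ (p ^ d * k) / ((p ^ d * k).factorial : K)‖ := ih (j + 1) k
        _ ≤ ‖γ j ^ (p * (p ^ d * k)) / ((p * (p ^ d * k)).factorial : K)‖ := hstep j (p ^ d * k)
        _ = ‖γ j ^ (p ^ (d + 1) * k) / ((p ^ (d + 1) * k).factorial : K)‖ := by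
            rw [show p * (p ^ d * k) = p ^ (d + 1) * k by ring]
  -- conclude
  have hk2 : k₂ = p ^ (j₁ - j₂) * k₁ := by
    have hppos : 0 < p ^ j₂ := Nat.pow_pos hp.pos
    have h1 : p ^ j₂ * (p ^ (j₁ - j₂) * k₁) = p ^ j₂ * k₂ := by
      rw [← mul_assoc, ← pow_add, Nat.add_sub_cancel' hj]
      exact hk
    exact (Nat.eq_of_mul_eq_mul_left hppos h1).symm
  have hj1 : j₁ = j₂ + (j₁ - j₂) := (Nat.add_sub_cancel' hj).symm
  rw [hj1, hk2]
  exact claim (j₁ - j₂) j₂ k₁
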